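/- Let X and Y be measurable spaces, let ε ∈ (0,1), let D be a probability measure on X × Y, and let g : X → Y be a function whose disagreement set {(x,y) : g(x) ≠ y} is measurable. Set n = ⌈(432/ε)·ln 100⌉ and consider the product measure D^{⊗n} on (X × Y)^n. Then with D^{⊗n}-probability at least 1 − 1/100, the sample tuple T satisfies both: (1) if err_D(g) ≤ ε/12 then err_T(g) ≤ ε/6, and (2) if err_D(g) > ε/4 then err_T(g) > ε/6. -/

import Mathlib

open MeasureTheory
open scoped Classical

lemma pi_eval_measure {Ω : Type*} [MeasurableSpace Ω] (D : Measure Ω) [IsProbabilityMeasure D]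
    {n : ℕ} (j : Fin n) {s : Set Ω} (_hs : MeasurableSet s) :
    Measure.pi (fun _ : Fin n => D) (Function.eval j ⁻¹' s) = D s := by
  rw [← Set.univ_pi_update_univ, Measure.pi_pi]
  rw [Finset.prod_eq_single j (fun i _ hij => by simp [Function.update_of_ne hij]) (by simp)]
  simp

lemma iIndepFun_eval {Ω : Type*} [MeasurableSpace Ω] (D : Measure Ω) [IsProbabilityMeasure D]
    (n : ℕ) :
    ProbabilityTheory.iIndepFun
      (fun j : Fin n => Function.eval j) (Measure.pi fun _ : Fin n => D) := by
  rw [ProbabilityTheory.iIndepFun_iff_measure_inter_preimage_eq_mul]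
  intro S sets hsets
  have hset : (⋂ i ∈ S, Function.eval i ⁻¹' sets i)
      = Set.pi Set.univ (fun i => if i ∈ S then sets i else Set.univ) := by
    ext T
    simp only [Set.mem_iInter, Set.mem_preimage, Set.mem_univ_pi]
    constructor
    · intro h i
      by_cases hi : i ∈ S <;> simp [hi, h]
    · intro h i hi
      simpa [hi] using h i
  rw [hset, Measure.pi_pi]
  have h1 : ∀ i, D (if i ∈ S then sets i else Set.univ) = if i ∈ S then D (sets i) else 1 := by
    intro i; split_ifs <;> simp
  simp_rw [h1]
  rw [Finset.prod_ite_mem Finset.univ S fun i => D (sets i), Finset.univ_inter]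
  exact (Finset.prod_congr rfl fun i hi => (pi_eval_measure D i (hsets i hi)).symm)

/-- Correctness of the `WeakTest` procedure for a single distribution: drawing
`n = ⌈(432/ε)·ln 100⌉` i.i.d. samples from `D`, with probability at least
`1 - 1/100` the empirical error of `g` on the sample is at most `ε/6` whenever
`err_D(g) ≤ ε/12`, and strictly greater than `ε/6` whenever `err_D(g) > ε/4`. -/
theorem weakTest_correct
    {X Y : Type*} [MeasurableSpace X] [MeasurableSpace Y]
    (ε : ℝ) (hε : ε ∈ Set.Ioo (0 : ℝ) 1)
    (D : Measure (X × Y)) [IsProbabilityMeasure D]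
    (g : X → Y) (hg : MeasurableSet {p : X × Y | g p.1 ≠ p.2})
    (n : ℕ) (hn : n = ⌈(432 / ε) * Real.log 100⌉₊)
    (μ : Measure (Fin n → X × Y))
    (hμ : μ = Measure.pi (fun _ : Fin n => D)) :
    ENNReal.ofReal (1 - 1 / 100) ≤
      μ {T | ((D {p : X × Y | g p.1 ≠ p.2}).toReal ≤ ε / 12 →
          ((Finset.univ.filter (fun j : Fin n => g (T j).1 ≠ (T j).2)).card : ℝ) / n ≤ ε / 6) ∧
        (ε / 4 < (D {p : X × Y | g p.1 ≠ p.2}).toReal →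
          ε / 6 < ((Finset.univ.filter (fun j : Fin n => g (T j).1 ≠ (T j).2)).card : ℝ) / n)} := by
  classical
  obtain ⟨hε0, hε1⟩ := hε
  haveI : IsProbabilityMeasure μ := by rw [hμ]; infer_instance
  set A : Set (X × Y) := {p : X × Y | g p.1 ≠ p.2} with hA
  set q : ℝ := (D A).toReal with hq
  have hq0 : 0 ≤ q := ENNReal.toReal_nonneg
  have hq1 : q ≤ 1 := by
    have h := (ENNReal.toReal_le_toReal (measure_ne_top D A) ENNReal.one_ne_top).mpr prob_le_one
    simpa using h
  have hlog : 0 < Real.log 100 := Real.log_pos (by norm_num)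
  have hnpos : 0 < n := by
    rw [hn]; exact Nat.ceil_pos.mpr (by positivity)
  have hnR : (0:ℝ) < n := by exact_mod_cast hnpos
  have hne : 432 * Real.log 100 ≤ (n:ℝ) * ε := by
    have h1 : (432 / ε) * Real.log 100 ≤ (n:ℝ) := by rw [hn]; exact Nat.le_ceil _
    have h2 : (432 / ε) * Real.log 100 * ε ≤ (n:ℝ) * ε :=
      mul_le_mul_of_nonneg_right h1 hε0.le
    calc 432 * Real.log 100 = (432 / ε) * Real.log 100 * ε := by field_simp
    _ ≤ (n:ℝ) * ε := h2
  -- the Bernoulli indicators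
  set Xf : Fin n → (Fin n → X × Y) → ℝ := fun j T => if T j ∈ A then 1 else 0 with hXf
  have hAj : ∀ j : Fin n, MeasurableSet ((Function.eval j : (Fin n → X × Y) → X × Y) ⁻¹' A) :=
    fun j => measurable_pi_apply j hg
  have hXmeas : ∀ j, Measurable (Xf j) := by
    intro j
    exact Measurable.ite (hAj j) measurable_const measurable_const
  have hIndep : ProbabilityTheory.iIndepFun Xf μ := by
    rw [hμ]
    exact (iIndepFun_eval D n).comp (fun _ => fun ω => if ω ∈ A then (1:ℝ) else 0)
      (fun _ => Measurable.ite hg measurable_const measurable_const)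
  have hμA : ∀ j, μ (Function.eval j ⁻¹' A) = D A := by
    intro j; rw [hμ]; exact pi_eval_measure D j hg
  have hexp_eq : ∀ (t : ℝ) j, (fun T => Real.exp (t * Xf j T)) =
      fun T => (Real.exp t - 1) * Set.indicator (Function.eval j ⁻¹' A) (fun _ => (1:ℝ)) T + 1 := by
    intro t j; funext T
    by_cases h : T j ∈ A
    · have hmem : T ∈ Function.eval j ⁻¹' A := h
      simp only [hXf, h, if_true, mul_one, Set.indicator_of_mem hmem]
      ring
    · have hmem : T ∉ Function.eval j ⁻¹' A := h
      simp [hXf, h, Set.indicator_of_notMem hmem]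
  have hint : ∀ (t : ℝ) j, Integrable (fun T => Real.exp (t * Xf j T)) μ := by
    intro t j; rw [hexp_eq t j]
    exact (((integrable_const (1:ℝ)).indicator (hAj j)).const_mul _).add (integrable_const 1)
  have hmgf : ∀ (t : ℝ) j, ProbabilityTheory.mgf (Xf j) μ t = 1 + q * (Real.exp t - 1) := by
    intro t j
    have h0 : ProbabilityTheory.mgf (Xf j) μ t
        = ∫ T, ((Real.exp t - 1) * Set.indicator (Function.eval j ⁻¹' A) (fun _ => (1:ℝ)) T + 1) ∂μ := by
      rw [ProbabilityTheory.mgf, ← hexp_eq]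
    rw [h0, integral_add (((integrable_const (1:ℝ)).indicator (hAj j)).const_mul _)
      (integrable_const 1), integral_const_mul, integral_indicator (hAj j),
      setIntegral_const, integral_const]
    simp only [smul_eq_mul, mul_one, measureReal_def, measure_univ, ENNReal.toReal_one, one_smul, hμA j, ← hq]
    ring
  have hmgfsum : ∀ t : ℝ, ProbabilityTheory.mgf (∑ j, Xf j) μ t
      ≤ Real.exp ((n:ℝ) * (q * (Real.exp t - 1))) := by
    intro t
    rw [hIndep.mgf_sum hXmeas Finset.univ]
    rw [Finset.prod_congr rfl (fun j _ => hmgf t j), Finset.prod_const, Finset.card_univ,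
      Fintype.card_fin]
    have hbase0 : 0 ≤ 1 + q * (Real.exp t - 1) := by
      nlinarith [Real.exp_pos t, mul_nonneg hq0 (Real.exp_pos t).le]
    calc (1 + q * (Real.exp t - 1)) ^ n ≤ (Real.exp (q * (Real.exp t - 1))) ^ n := by
          apply pow_le_pow_left₀ hbase0
          linarith [Real.add_one_le_exp (q * (Real.exp t - 1))]
      _ = Real.exp ((n:ℝ) * (q * (Real.exp t - 1))) := by
          rw [← Real.exp_nat_mul]
  have hSint : ∀ t : ℝ, Integrable (fun T => Real.exp (t * (∑ j, Xf j) T)) μ :=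
    fun t => hIndep.integrable_exp_mul_sum hXmeas (fun i _ => hint t i)
  set a : ℝ := (n:ℝ) * ε / 6 with ha
  -- upper tail bound under q ≤ ε/12
  have case1 : q ≤ ε / 12 → (μ {T | a ≤ (∑ j, Xf j) T}).toReal ≤ 1 / 100 := by
    intro hqle
    have ht : (0:ℝ) ≤ Real.log 2 := Real.log_nonneg one_le_two
    have hchern := ProbabilityTheory.measure_ge_le_exp_mul_mgf (X := ∑ j, Xf j) (μ := μ)
      a ht (hSint _)
    have hexp2 : Real.exp (Real.log 2) = 2 := Real.exp_log two_pos
    have hb := hmgfsum (Real.log 2)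
    have hcomb : (μ {T | a ≤ (∑ j, Xf j) T}).toReal
        ≤ Real.exp (-(Real.log 2) * a + (n:ℝ) * (q * (2 - 1))) := by
      rw [Real.exp_add]
      calc (μ {T | a ≤ (∑ j, Xf j) T}).toReal
          ≤ Real.exp (-(Real.log 2) * a) * ProbabilityTheory.mgf (∑ j, Xf j) μ (Real.log 2) :=
            hchern
        _ ≤ Real.exp (-(Real.log 2) * a) * Real.exp ((n:ℝ) * (q * (2 - 1))) := by
            have := hb; rw [hexp2] at this
            exact mul_le_mul_of_nonneg_left this (Real.exp_pos _).le
    refine hcomb.trans ?_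
    have hlt : -(Real.log 2) * a + (n:ℝ) * (q * (2 - 1)) ≤ -(Real.log 100) := by
      have hl2 : (0.6931471803 : ℝ) < Real.log 2 := Real.log_two_gt_d9
      have hnq : (n:ℝ) * q ≤ (n:ℝ) * ε / 12 := by
        calc (n:ℝ) * q ≤ (n:ℝ) * (ε / 12) := mul_le_mul_of_nonneg_left hqle hnR.le
          _ = (n:ℝ) * ε / 12 := by ring
      rw [ha]
      nlinarith [mul_nonneg hnR.le hε0.le, hne]
    calc Real.exp (-(Real.log 2) * a + (n:ℝ) * (q * (2 - 1)))
        ≤ Real.exp (-(Real.log 100)) := Real.exp_le_exp.mpr hlt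
      _ = 1 / 100 := by
          rw [Real.exp_neg, Real.exp_log (by norm_num : (0:ℝ) < 100)]; norm_num
  -- lower tail bound under ε/4 < q
  have case2 : ε / 4 < q → (μ {T | (∑ j, Xf j) T ≤ a}).toReal ≤ 1 / 100 := by
    intro hqgt
    have ht : -(Real.log 2) ≤ 0 := neg_nonpos.mpr (Real.log_nonneg one_le_two)
    have hchern := ProbabilityTheory.measure_le_le_exp_mul_mgf (X := ∑ j, Xf j) (μ := μ)
      (t := -(Real.log 2)) a ht (hSint _)
    have hexp2 : Real.exp (-(Real.log 2)) = 1 / 2 := by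
      rw [Real.exp_neg, Real.exp_log two_pos]; norm_num
    have hb := hmgfsum (-(Real.log 2))
    have hcomb : (μ {T | (∑ j, Xf j) T ≤ a}).toReal
        ≤ Real.exp (Real.log 2 * a + (n:ℝ) * (q * (1 / 2 - 1))) := by
      rw [Real.exp_add]
      calc (μ {T | (∑ j, Xf j) T ≤ a}).toReal
          ≤ Real.exp (-(-(Real.log 2)) * a) * ProbabilityTheory.mgf (∑ j, Xf j) μ (-(Real.log 2)) :=
            hchern
        _ ≤ Real.exp (Real.log 2 * a) * Real.exp ((n:ℝ) * (q * (1 / 2 - 1))) := by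
            rw [neg_neg]
            have := hb; rw [hexp2] at this
            exact mul_le_mul_of_nonneg_left this (Real.exp_pos _).le
    refine hcomb.trans ?_
    have hlt : Real.log 2 * a + (n:ℝ) * (q * (1 / 2 - 1)) ≤ -(Real.log 100) := by
      have hl2 : Real.log 2 < 0.6931471808 := Real.log_two_lt_d9
      have hl2' : (0:ℝ) ≤ Real.log 2 := Real.log_nonneg one_le_two
      have hnq : (n:ℝ) * ε / 4 ≤ (n:ℝ) * q := by
        calc (n:ℝ) * ε / 4 = (n:ℝ) * (ε / 4) := by ring
          _ ≤ (n:ℝ) * q := mul_le_mul_of_nonneg_left hqgt.le hnR.le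
      rw [ha]
      nlinarith [mul_nonneg hnR.le hε0.le, hne]
    calc Real.exp (Real.log 2 * a + (n:ℝ) * (q * (1 / 2 - 1)))
        ≤ Real.exp (-(Real.log 100)) := Real.exp_le_exp.mpr hlt
      _ = 1 / 100 := by
          rw [Real.exp_neg, Real.exp_log (by norm_num : (0:ℝ) < 100)]; norm_num
  -- identify the sum with the filter-card
  have hsum_card : ∀ T : Fin n → X × Y, (∑ j, Xf j) T
      = ((Finset.univ.filter (fun j : Fin n => g (T j).1 ≠ (T j).2)).card : ℝ) := by
    intro T
    rw [Finset.sum_apply, Finset.card_filter]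
    push_cast
    refine Finset.sum_congr rfl fun j _ => ?_
    simp only [hXf]
    congr 1
  have hSmeas : Measurable (∑ j, Xf j) := by
    have h := Finset.measurable_sum (f := Xf) Finset.univ (fun j _ => hXmeas j)
    convert h using 1
    funext T
    exact Finset.sum_apply _ _ _
  -- final case split
  rcases le_or_gt q (ε / 12) with h1 | h1
  · -- second implication vacuous
    have hvac : ¬ (ε / 4 < q) := by linarith
    have hEsub : {T | a ≤ (∑ j, Xf j) T}ᶜ ⊆
        {T | ((D A).toReal ≤ ε / 12 →
            ((Finset.univ.filter (fun j : Fin n => g (T j).1 ≠ (T j).2)).card : ℝ) / n ≤ ε / 6) ∧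
          (ε / 4 < (D A).toReal →
            ε / 6 < ((Finset.univ.filter (fun j : Fin n => g (T j).1 ≠ (T j).2)).card : ℝ) / n)} := by
      intro T hT
      have hlt : (∑ j, Xf j) T < a := not_le.mp hT
      rw [hsum_card T] at hlt
      constructor
      · intro _
        rw [div_le_iff₀ hnR]
        rw [ha] at hlt
        linarith
      · intro h; exact absurd h hvac
    have hBmeas : MeasurableSet {T | a ≤ (∑ j, Xf j) T} :=
      measurableSet_le measurable_const hSmeas
    have h2 : μ {T | a ≤ (∑ j, Xf j) T} ≤ ENNReal.ofReal (1 / 100) := by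
      rw [← ENNReal.ofReal_toReal (measure_ne_top μ _)]
      exact ENNReal.ofReal_le_ofReal (case1 h1)
    calc ENNReal.ofReal (1 - 1 / 100) = 1 - ENNReal.ofReal (1 / 100) := by
          rw [ENNReal.ofReal_sub _ (by norm_num), ENNReal.ofReal_one]
      _ ≤ 1 - μ {T | a ≤ (∑ j, Xf j) T} := tsub_le_tsub_left h2 1
      _ = μ ({T | a ≤ (∑ j, Xf j) T}ᶜ) := (prob_compl_eq_one_sub hBmeas).symm
      _ ≤ _ := measure_mono hEsub
  rcases le_or_gt q (ε / 4) with h2 | h2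
  · -- both implications vacuous
    have hEuniv : {T : Fin n → X × Y | ((D A).toReal ≤ ε / 12 →
            ((Finset.univ.filter (fun j : Fin n => g (T j).1 ≠ (T j).2)).card : ℝ) / n ≤ ε / 6) ∧
          (ε / 4 < (D A).toReal →
            ε / 6 < ((Finset.univ.filter (fun j : Fin n => g (T j).1 ≠ (T j).2)).card : ℝ) / n)}
        = Set.univ := by
      refine Set.eq_univ_of_forall fun T => ?_
      exact ⟨fun h => absurd h (by rw [← hq]; linarith), fun h => absurd h (by rw [← hq]; linarith)⟩
    rw [hEuniv, measure_univ]
    exact ENNReal.ofReal_le_one.mpr (by norm_num)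
  · -- first implication vacuous
    have hvac : ¬ ((D A).toReal ≤ ε / 12) := by rw [← hq]; linarith
    have hEsub : {T | (∑ j, Xf j) T ≤ a}ᶜ ⊆
        {T | ((D A).toReal ≤ ε / 12 →
            ((Finset.univ.filter (fun j : Fin n => g (T j).1 ≠ (T j).2)).card : ℝ) / n ≤ ε / 6) ∧
          (ε / 4 < (D A).toReal →
            ε / 6 < ((Finset.univ.filter (fun j : Fin n => g (T j).1 ≠ (T j).2)).card : ℝ) / n)} := by
      intro T hT
      have hlt : a < (∑ j, Xf j) T := not_le.mp hT
      rw [hsum_card T] at hlt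
      constructor
      · intro h; exact absurd h hvac
      · intro _
        rw [lt_div_iff₀ hnR]
        rw [ha] at hlt
        linarith
    have hBmeas : MeasurableSet {T | (∑ j, Xf j) T ≤ a} :=
      measurableSet_le hSmeas measurable_const
    have h3 : μ {T | (∑ j, Xf j) T ≤ a} ≤ ENNReal.ofReal (1 / 100) := by
      rw [← ENNReal.ofReal_toReal (measure_ne_top μ _)]
      exact ENNReal.ofReal_le_ofReal (case2 h2)
    calc ENNReal.ofReal (1 - 1 / 100) = 1 - ENNReal.ofReal (1 / 100) := by
          rw [ENNReal.ofReal_sub _ (by norm_num), ENNReal.ofReal_one]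
      _ ≤ 1 - μ {T | (∑ j, Xf j) T ≤ a} := tsub_le_tsub_left h3 1
      _ = μ ({T | (∑ j, Xf j) T ≤ a}ᶜ) := (prob_compl_eq_one_sub hBmeas).symm
      _ ≤ _ := measure_mono hEsub
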